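/- For every (2k)×(2k) real matrix h with trace zero (k ≥ 1), the sum of squares of all entries satisfies ∑_{i,j} h_ij² ≥ 2·σ₂(h), where σ₂(h) = ∑_{i<j} (h_ii·h_jj − h_ij·h_ji). -/

import Mathlib

lemma split_univ_aux {n : ℕ} (i : Fin n) (g : Fin n → ℝ) :
    ∑ j, g j = ∑ j ∈ Finset.Iio i, g j + g i + ∑ j ∈ Finset.Ioi i, g j := by
  have h1 : (Finset.Iio i) ∪ (Finset.Ici i) = Finset.univ := by
    ext x
    simp only [Finset.mem_union, Finset.mem_Iio, Finset.mem_Ici, Finset.mem_univ, iff_true]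
    exact lt_or_ge x i
  have hd : Disjoint (Finset.Iio i) (Finset.Ici i) := by
    simp [Finset.disjoint_left]
  rw [← h1, Finset.sum_union hd, ← Finset.Ioi_insert, Finset.sum_insert (by simp)]
  ring

lemma pair_split_aux {n : ℕ} (f : Fin n → Fin n → ℝ) :
    ∑ i, ∑ j, f i j = ∑ i, f i i + ∑ i, ∑ j ∈ Finset.Ioi i, (f i j + f j i) := by
  have swap : ∑ i : Fin n, ∑ j ∈ Finset.Ioi i, f j i
      = ∑ i : Fin n, ∑ j ∈ Finset.Iio i, f i j := by
    rw [Finset.sum_comm' (t' := Finset.univ) (s' := fun y => Finset.Iio y)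
      (by intro x y; simp [Finset.mem_Ioi, Finset.mem_Iio])]
  calc ∑ i, ∑ j, f i j
      = ∑ i, (∑ j ∈ Finset.Iio i, f i j + f i i + ∑ j ∈ Finset.Ioi i, f i j) := by
        refine Finset.sum_congr rfl fun i _ => ?_
        exact split_univ_aux i (f i)
    _ = ∑ i, f i i + (∑ i, ∑ j ∈ Finset.Ioi i, f i j + ∑ i, ∑ j ∈ Finset.Iio i, f i j) := by
        rw [← Finset.sum_add_distrib, ← Finset.sum_add_distrib]
        refine Finset.sum_congr rfl fun i _ => ?_
        ring
    _ = ∑ i, f i i + ∑ i, ∑ j ∈ Finset.Ioi i, (f i j + f j i) := by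
        rw [← swap, ← Finset.sum_add_distrib]
        congr 1
        refine Finset.sum_congr rfl fun i _ => ?_
        rw [← Finset.sum_add_distrib]

theorem sum_sq_ge_two_sigma2 (k : ℕ) (hk : 1 ≤ k)
    (h : Matrix (Fin (2 * k)) (Fin (2 * k)) ℝ)
    (htr : ∑ i : Fin (2 * k), h i i = 0) :
    ∑ i : Fin (2 * k), ∑ j : Fin (2 * k), h i j ^ 2 ≥
      2 * ∑ i : Fin (2 * k), ∑ j ∈ Finset.Ioi i, (h i i * h j j - h i j * h j i) := by
  -- identity: 2 σ₂ = (tr h)² - ∑_{i,j} h i j * h j i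
  have hps := pair_split_aux (fun i j => h i i * h j j - h i j * h j i)
  have hdiag : ∑ i : Fin (2 * k), (h i i * h i i - h i i * h i i) = 0 := by simp
  have hsym : ∑ i : Fin (2 * k), ∑ j ∈ Finset.Ioi i,
      ((h i i * h j j - h i j * h j i) + (h j j * h i i - h j i * h i j))
      = 2 * ∑ i : Fin (2 * k), ∑ j ∈ Finset.Ioi i, (h i i * h j j - h i j * h j i) := by
    rw [Finset.mul_sum]
    refine Finset.sum_congr rfl fun i _ => ?_
    rw [Finset.mul_sum]
    refine Finset.sum_congr rfl fun j _ => ?_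
    ring
  have htr2 : ∑ i : Fin (2 * k), ∑ j : Fin (2 * k), h i i * h j j = 0 := by
    have : ∑ i : Fin (2 * k), ∑ j : Fin (2 * k), h i i * h j j
        = (∑ i : Fin (2 * k), h i i) * (∑ j : Fin (2 * k), h j j) := by
      rw [Finset.sum_mul]
      exact Finset.sum_congr rfl fun i _ => by rw [Finset.mul_sum]
    rw [this, htr, zero_mul]
  have key : 2 * ∑ i : Fin (2 * k), ∑ j ∈ Finset.Ioi i, (h i i * h j j - h i j * h j i)
      = - ∑ i : Fin (2 * k), ∑ j : Fin (2 * k), h i j * h j i := by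
    have expand : ∑ i : Fin (2 * k), ∑ j : Fin (2 * k), (h i i * h j j - h i j * h j i)
        = - ∑ i : Fin (2 * k), ∑ j : Fin (2 * k), h i j * h j i := by
      have hsub : ∀ i : Fin (2 * k), ∑ j : Fin (2 * k), (h i i * h j j - h i j * h j i)
          = ∑ j : Fin (2 * k), h i i * h j j - ∑ j : Fin (2 * k), h i j * h j i := fun i =>
        Finset.sum_sub_distrib _ _
      rw [Finset.sum_congr rfl fun i _ => hsub i, Finset.sum_sub_distrib, htr2, zero_sub]
    linarith [hps, hdiag, hsym, expand]
  -- now reduce to ∑ (h i j + h j i)² ≥ 0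
  have sq_nonneg_sum : (0:ℝ) ≤ ∑ i : Fin (2 * k), ∑ j : Fin (2 * k), (h i j + h j i) ^ 2 :=
    Finset.sum_nonneg fun i _ => Finset.sum_nonneg fun j _ => sq_nonneg _
  have hsymsq : ∑ i : Fin (2 * k), ∑ j : Fin (2 * k), h j i ^ 2
      = ∑ i : Fin (2 * k), ∑ j : Fin (2 * k), h i j ^ 2 := Finset.sum_comm
  have expand2 : ∑ i : Fin (2 * k), ∑ j : Fin (2 * k), (h i j + h j i) ^ 2
      = ∑ i : Fin (2 * k), ∑ j : Fin (2 * k), h i j ^ 2 + ∑ i : Fin (2 * k), ∑ j : Fin (2 * k), h j i ^ 2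
        + 2 * ∑ i : Fin (2 * k), ∑ j : Fin (2 * k), h i j * h j i := by
    have : ∀ i : Fin (2 * k), ∀ j : Fin (2 * k),
        (h i j + h j i) ^ 2 = h i j ^ 2 + h j i ^ 2 + 2 * (h i j * h j i) := by
      intro i j; ring
    calc ∑ i : Fin (2 * k), ∑ j : Fin (2 * k), (h i j + h j i) ^ 2
        = ∑ i : Fin (2 * k), ∑ j : Fin (2 * k), (h i j ^ 2 + h j i ^ 2 + 2 * (h i j * h j i)) := by
          exact Finset.sum_congr rfl fun i _ => Finset.sum_congr rfl fun j _ => this i j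
      _ = _ := by
          rw [Finset.mul_sum]
          simp only [Finset.sum_add_distrib, Finset.mul_sum]
  rw [key]
  rw [hsymsq] at expand2
  linarith [sq_nonneg_sum, expand2]
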